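/- Let X and Y be nonempty vertex subsets of a graph G, let δ > 0, and let k be a positive integer with k ≤ |X| and k ≤ |Y|. Then the number of pairs (X', Y') with X' ⊆ X, Y' ⊆ Y, |X'| = |Y'| = k and |d(X',Y') − d(X,Y)| < δ is at least (1 − 2·e^{−δ²k/4})·C(|X|,k)·C(|Y|,k), where C(n,k) denotes the binomial coefficient. Equivalently, if X' ⊆ X and Y' ⊆ Y are chosen uniformly at random subject to |X'| = |Y'| = k, then ℙ(|d(X',Y') − d(X,Y)| < δ) ≥ 1 − 2·e^{−δ²k/4}. -/

import Mathlib

open Finset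

variable {V : Type*} [Fintype V] [DecidableEq V]

/-- Number of ordered pairs `(x,y) ∈ X × Y` that are edges of `G`. -/
def epairs (G : SimpleGraph V) [DecidableRel G.Adj] (X Y : Finset V) : ℕ :=
  ((X ×ˢ Y).filter fun p => G.Adj p.1 p.2).card

/-- Edge density between `X` and `Y`. -/
noncomputable def dens (G : SimpleGraph V) [DecidableRel G.Adj] (X Y : Finset V) : ℝ :=
  (epairs G X Y : ℝ) / ((X.card : ℝ) * (Y.card : ℝ))

section Aux

set_option linter.unusedSectionVars false
set_option linter.unusedVariables false

/-- tangent line bound for x^k at s, for nonneg reals -/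
lemma pow_tangent {s y : ℝ} (hs : 0 ≤ s) (hy : 0 ≤ y) (k : ℕ) :
    s ^ k + k * s ^ (k - 1) * (y - s) ≤ y ^ k := by
  rcases Nat.eq_zero_or_pos k with rfl | hk
  · simp
  have hgeom : (∑ i ∈ range k, y ^ i * s ^ (k - 1 - i)) * (y - s) = y ^ k - s ^ k :=
    geom_sum₂_mul y s k
  have key : (k : ℝ) * s ^ (k - 1) * (y - s) ≤ (∑ i ∈ range k, y ^ i * s ^ (k - 1 - i)) * (y - s) := by
    rcases le_total s y with h | h
    · apply mul_le_mul_of_nonneg_right _ (by linarith)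
      calc (k : ℝ) * s ^ (k - 1) = ∑ i ∈ range k, s ^ i * s ^ (k - 1 - i) := by
            rw [Finset.sum_congr rfl fun i hi => ?_, Finset.sum_const, card_range,
              nsmul_eq_mul]
            rw [← pow_add]
            have := mem_range.1 hi
            congr 1
            omega
        _ ≤ _ := Finset.sum_le_sum fun i _ => by
            exact mul_le_mul_of_nonneg_right (pow_le_pow_left₀ hs h i) (pow_nonneg hs _)
    · rw [← neg_le_neg_iff, ← mul_neg, ← mul_neg]
      apply mul_le_mul_of_nonneg_right _ (by linarith)
      calc (∑ i ∈ range k, y ^ i * s ^ (k - 1 - i)) ≤ ∑ i ∈ range k, s ^ i * s ^ (k - 1 - i) :=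
            Finset.sum_le_sum fun i _ => by
              exact mul_le_mul_of_nonneg_right (pow_le_pow_left₀ hy h i) (pow_nonneg hs _)
        _ = (k : ℝ) * s ^ (k - 1) := by
            rw [Finset.sum_congr rfl fun i hi => ?_, Finset.sum_const, card_range, nsmul_eq_mul]
            rw [← pow_add]
            have := mem_range.1 hi
            congr 1
            omega
  nlinarith [hgeom]



lemma esymm_le_mean_pow (X : Finset V) (b : V → ℝ) (hb : ∀ x ∈ X, 0 ≤ b x) (k : ℕ) :
    ∑ S ∈ X.powersetCard k, ∏ x ∈ S, b x ≤
      (X.card.choose k : ℝ) * ((∑ x ∈ X, b x) / X.card) ^ k := by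
  induction X using Finset.induction generalizing k with
  | empty =>
    cases k with
    | zero => simp
    | succ j =>
      rw [show (∅ : Finset V).powersetCard (j+1) = ∅ from Finset.powersetCard_eq_empty.2 (by simp)]
      simp
  | insert _ _ ha =>
    rename_i a s ih
    have hba : 0 ≤ b a := hb a (mem_insert_self a s)
    have hbs : ∀ x ∈ s, 0 ≤ b x := fun x hx => hb x (mem_insert_of_mem hx)
    cases k with
    | zero => simp
    | succ j =>
      -- decompose the sum
      have hsplit : ∑ S ∈ (insert a s).powersetCard (j+1), ∏ x ∈ S, b x =
          (∑ S ∈ s.powersetCard (j+1), ∏ x ∈ S, b x) +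
            b a * ∑ S ∈ s.powersetCard j, ∏ x ∈ S, b x := by
        rw [powersetCard_succ_insert ha]
        rw [Finset.sum_union]
        · congr 1
          rw [Finset.sum_image, Finset.mul_sum]
          · apply Finset.sum_congr rfl
            intro S hS
            have haS : a ∉ S := fun h => ha ((mem_powersetCard.1 hS).1 h)
            rw [Finset.prod_insert haS]
          · intro S hS T hT hST
            have haS : a ∉ S := fun h => ha ((mem_powersetCard.1 hS).1 h)
            have haT : a ∉ T := fun h => ha ((mem_powersetCard.1 hT).1 h)
            rw [← Finset.erase_insert haS, ← Finset.erase_insert haT, hST]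
        · rw [Finset.disjoint_left]
          intro S hS hS'
          obtain ⟨T, hT, rfl⟩ := Finset.mem_image.1 hS'
          exact ha ((mem_powersetCard.1 hS).1 (mem_insert_self a T))
      rcases s.eq_empty_or_nonempty with rfl | hs
      · cases j with
        | zero =>
          rw [hsplit]
          rw [show (∅ : Finset V).powersetCard (0+1) = ∅ from Finset.powersetCard_eq_empty.2 (by simp)]
          simp [show ({a} : Finset V).card = 1 from Finset.card_singleton a]
        | succ i =>
          rw [hsplit]
          rw [show (∅ : Finset V).powersetCard (i+1+1) = ∅ from Finset.powersetCard_eq_empty.2 (by simp),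
            show (∅ : Finset V).powersetCard (i+1) = ∅ from Finset.powersetCard_eq_empty.2 (by simp)]
          rw [show (insert a (∅:Finset V)).card.choose (i+1+1) = 0 from
            Nat.choose_eq_zero_of_lt (by simp)]
          simp
      · -- main case
        set n : ℕ := s.card + 1 with hn
        have hm0 : (0:ℕ) < s.card := hs.card_pos
        have hm0R : (0:ℝ) < (s.card : ℝ) := by exact_mod_cast hm0
        have hnR : (0:ℝ) < (n : ℝ) := by positivity
        set S : ℝ := ∑ x ∈ s, b x with hS
        have hSnn : 0 ≤ S := Finset.sum_nonneg hbs
        set t : ℝ := b a with ht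
        set sb : ℝ := S / s.card with hsb
        set m : ℝ := (S + t) / n with hm
        have hsbnn : 0 ≤ sb := by positivity
        have hmnn : 0 ≤ m := by positivity
        have ih1 := ih (fun x hx => hbs x hx) (j+1)
        have ih0 := ih (fun x hx => hbs x hx) j
        have hC : ((s.card.choose (j+1) : ℝ)) + (s.card.choose j : ℝ) = (n.choose (j+1) : ℝ) := by
          rw [hn]
          push_cast [Nat.choose_succ_succ']
          ring
        have hCjN : n.choose (j+1) * (j+1) = n * s.card.choose j := by
          rw [hn]
          exact (Nat.add_one_mul_choose_eq s.card j).symm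
        have hCj : ((n.choose (j+1) : ℝ)) * ((j:ℝ)+1) = (n : ℝ) * (s.card.choose j : ℝ) := by
          exact_mod_cast congrArg (fun x : ℕ => (x : ℝ)) hCjN
        have hms : (m - sb) * n = t - sb := by
          rw [hm, hsb]
          field_simp
          rw [hn]
          push_cast
          ring
        have htan := pow_tangent hsbnn hmnn (j+1)
        simp only [Nat.add_sub_cancel] at htan
        push_cast at htan
        have hCnn : (0:ℝ) ≤ (n.choose (j+1) : ℝ) := by positivity
        have key : (s.card.choose (j+1) : ℝ) * sb ^ (j+1) + t * ((s.card.choose j : ℝ) * sb ^ j) ≤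
            (n.choose (j+1) : ℝ) * m ^ (j+1) := by
          have h1 : (n.choose (j+1) : ℝ) * (sb ^ (j+1) + ((j:ℝ)+1) * sb ^ j * (m - sb)) ≤
              (n.choose (j+1) : ℝ) * m ^ (j+1) := by
            apply mul_le_mul_of_nonneg_left htan hCnn
          refine le_trans (le_of_eq ?_) h1
          linear_combination (sb^(j+1)) * hC + (-(sb^j*(m-sb))) * hCj +
            (-((s.card.choose j : ℝ) * sb^j)) * hms
        have hcard : (insert a s).card = n := by
          rw [Finset.card_insert_of_notMem ha, hn]
        have hsum : ∑ x ∈ insert a s, b x = t + S := by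
          rw [Finset.sum_insert ha, ht, hS]
        rw [hsplit, hcard, hsum]
        have : (t + S) / (n:ℝ) = m := by rw [hm]; ring_nf
        rw [this]
        calc (∑ S ∈ s.powersetCard (j+1), ∏ x ∈ S, b x) + b a * ∑ S ∈ s.powersetCard j, ∏ x ∈ S, b x
            ≤ (s.card.choose (j+1) : ℝ) * sb ^ (j+1) + t * ((s.card.choose j : ℝ) * sb ^ j) := by
              apply add_le_add ih1
              exact mul_le_mul_of_nonneg_left ih0 hba
          _ ≤ _ := key

lemma hoeffding_core {μ lam : ℝ} (hμ0 : 0 ≤ μ) (hμ1 : μ ≤ 1) (hlam : 0 ≤ lam) :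
    Real.exp (-lam * μ) * (1 - μ + μ * Real.exp lam) ≤ Real.exp (lam ^ 2 / 8) := by
  set u : ℝ → ℝ := fun x => 1 - μ + μ * Real.exp x with hu
  have hupos : ∀ x ∈ Set.Ici (0:ℝ), 0 < u x := by
    intro x hx
    have h1 : (1:ℝ) ≤ Real.exp x := Real.one_le_exp hx
    have : μ ≤ μ * Real.exp x := le_mul_of_one_le_right hμ0 h1
    simp only [hu]
    nlinarith
  have hud : ∀ x : ℝ, HasDerivAt u (μ * Real.exp x) x := by
    intro x
    exact ((Real.hasDerivAt_exp x).const_mul μ).const_add (1 - μ)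
  set p : ℝ → ℝ := fun x => μ * Real.exp x / u x with hp
  have hpd : ∀ x ∈ Set.Ici (0:ℝ), HasDerivAt p (p x - (p x) ^ 2) x := by
    intro x hx
    have hne : u x ≠ 0 := ne_of_gt (hupos x hx)
    have := ((Real.hasDerivAt_exp x).const_mul μ).div (hud x) hne
    refine this.congr_deriv ?_
    rw [show p x = μ * Real.exp x / u x from rfl]
    field_simp [hp]
  set g : ℝ → ℝ := fun x => p x - μ - x / 4 with hg
  have hgd : ∀ x ∈ Set.Ici (0:ℝ), HasDerivAt g (p x - (p x) ^ 2 - 1 / 4) x := by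
    intro x hx
    exact ((hpd x hx).sub_const μ).sub ((hasDerivAt_id x).div_const 4)
  have hganti : AntitoneOn g (Set.Ici (0:ℝ)) := by
    apply antitoneOn_of_deriv_nonpos (convex_Ici 0)
    · intro x hx
      exact ((hgd x hx).continuousAt).continuousWithinAt
    · intro x hx
      rw [interior_Ici] at hx
      exact ((hgd x (Set.mem_Ici.2 (le_of_lt (Set.mem_Ioi.1 hx)))).differentiableAt).differentiableWithinAt
    · intro x hx
      rw [interior_Ici] at hx
      rw [(hgd x (Set.mem_Ici.2 (le_of_lt (Set.mem_Ioi.1 hx)))).deriv]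
      nlinarith [sq_nonneg (p x - 1 / 2)]
  have hg0 : g 0 = 0 := by
    simp only [hg, hp, hu]
    norm_num
  have hgle : ∀ x ∈ Set.Ici (0:ℝ), g x ≤ 0 := by
    intro x hx
    calc g x ≤ g 0 := hganti (Set.self_mem_Ici) hx hx
      _ = 0 := hg0
  set f : ℝ → ℝ := fun x => Real.log (u x) - x * μ - x ^ 2 / 8 with hf
  have hfd : ∀ x ∈ Set.Ici (0:ℝ), HasDerivAt f (g x) x := by
    intro x hx
    have hne : u x ≠ 0 := ne_of_gt (hupos x hx)
    have h1 : HasDerivAt (fun y => Real.log (u y)) (μ * Real.exp x / u x) x :=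
      (hud x).log hne
    have ha : HasDerivAt (fun y : ℝ => y * μ) μ x := by
      simpa using (hasDerivAt_id x).mul_const μ
    have hb : HasDerivAt (fun y : ℝ => y ^ 2 / 8) (x / 4) x := by
      have h := (hasDerivAt_pow 2 x).div_const 8
      refine h.congr_deriv ?_
      push_cast
      ring
    have h2 := (h1.sub ha).sub hb
    exact h2
  have hfanti : AntitoneOn f (Set.Ici (0:ℝ)) := by
    apply antitoneOn_of_deriv_nonpos (convex_Ici 0)
    · intro x hx
      exact ((hfd x hx).continuousAt).continuousWithinAt
    · intro x hx
      rw [interior_Ici] at hx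
      exact ((hfd x (Set.mem_Ici.2 (le_of_lt (Set.mem_Ioi.1 hx)))).differentiableAt).differentiableWithinAt
    · intro x hx
      rw [interior_Ici] at hx
      rw [(hfd x (Set.mem_Ici.2 (le_of_lt (Set.mem_Ioi.1 hx)))).deriv]
      exact hgle x (Set.mem_Ici.2 (le_of_lt (Set.mem_Ioi.1 hx)))
  have hf0 : f 0 = 0 := by
    simp only [hf, hu]
    norm_num
  have hfle : f lam ≤ 0 := by
    calc f lam ≤ f 0 := hfanti (Set.self_mem_Ici) hlam hlam
      _ = 0 := hf0
  have hupos' : 0 < u lam := hupos lam hlam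
  have hlog : Real.log (u lam) ≤ lam * μ + lam ^ 2 / 8 := by
    simp only [hf] at hfle
    linarith
  have hule : u lam ≤ Real.exp (lam * μ + lam ^ 2 / 8) :=
    (Real.log_le_iff_le_exp hupos').1 hlog
  calc Real.exp (-lam * μ) * (1 - μ + μ * Real.exp lam)
      ≤ Real.exp (-lam * μ) * Real.exp (lam * μ + lam ^ 2 / 8) :=
        mul_le_mul_of_nonneg_left hule (Real.exp_nonneg _)
    _ = Real.exp (lam ^ 2 / 8) := by
        rw [← Real.exp_add]
        ring_nf





lemma exp_le_affine {a lam : ℝ} (h0 : 0 ≤ a) (h1 : a ≤ 1) :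
    Real.exp (lam * a) ≤ 1 - a + a * Real.exp lam := by
  have h := convexOn_exp.2 (Set.mem_univ (0:ℝ)) (Set.mem_univ lam)
    (by linarith : (0:ℝ) ≤ 1 - a) h0 (by ring)
  simp only [smul_eq_mul, mul_zero, zero_add, Real.exp_zero, mul_one] at h
  calc Real.exp (lam * a) = Real.exp (a * lam) := by rw [mul_comm]
    _ ≤ (1 - a) + a * Real.exp lam := h

lemma mgf_sum_bound (X : Finset V) (hX : X.Nonempty) (a : V → ℝ)
    (h0 : ∀ x ∈ X, 0 ≤ a x) (h1 : ∀ x ∈ X, a x ≤ 1) {lam : ℝ} (hlam : 0 ≤ lam) :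
    ∑ x ∈ X, Real.exp (lam * (a x - (∑ y ∈ X, a y) / X.card)) ≤
      (X.card : ℝ) * Real.exp (lam ^ 2 / 8) := by
  set μ : ℝ := (∑ y ∈ X, a y) / X.card with hμ
  have hNpos : (0:ℝ) < X.card := by exact_mod_cast hX.card_pos
  have hμ0 : 0 ≤ μ := by
    apply div_nonneg _ (le_of_lt hNpos)
    exact Finset.sum_nonneg h0
  have hμ1 : μ ≤ 1 := by
    rw [hμ, div_le_one hNpos]
    calc ∑ y ∈ X, a y ≤ ∑ y ∈ X, 1 := Finset.sum_le_sum h1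
      _ = (X.card : ℝ) := by simp
  have step : ∀ x ∈ X, Real.exp (lam * (a x - μ)) ≤
      Real.exp (-lam * μ) * (1 - a x + a x * Real.exp lam) := by
    intro x hx
    have : Real.exp (lam * (a x - μ)) = Real.exp (-lam * μ) * Real.exp (lam * a x) := by
      rw [← Real.exp_add]; ring_nf
    rw [this]
    exact mul_le_mul_of_nonneg_left (exp_le_affine (h0 x hx) (h1 x hx)) (Real.exp_nonneg _)
  calc ∑ x ∈ X, Real.exp (lam * (a x - μ))
      ≤ ∑ x ∈ X, Real.exp (-lam * μ) * (1 - a x + a x * Real.exp lam) :=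
        Finset.sum_le_sum step
    _ = (X.card : ℝ) * (Real.exp (-lam * μ) * (1 - μ + μ * Real.exp lam)) := by
        rw [← Finset.mul_sum]
        have : ∑ x ∈ X, (1 - a x + a x * Real.exp lam) =
            (X.card : ℝ) * (1 - μ + μ * Real.exp lam) := by
          rw [Finset.sum_add_distrib, Finset.sum_sub_distrib, ← Finset.sum_mul]
          simp only [Finset.sum_const, nsmul_eq_mul, mul_one]
          have hsum : ∑ y ∈ X, a y = (X.card : ℝ) * μ := by
            rw [hμ]; field_simp
          rw [hsum]; ring
        rw [this]; ring
    _ ≤ (X.card : ℝ) * Real.exp (lam ^ 2 / 8) :=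
        mul_le_mul_of_nonneg_left (hoeffding_core hμ0 hμ1 hlam) (le_of_lt hNpos)

lemma chernoff_upper (X : Finset V) (a : V → ℝ)
    (h0 : ∀ x ∈ X, 0 ≤ a x) (h1 : ∀ x ∈ X, a x ≤ 1)
    (k : ℕ) (hk : 0 < k) (hkn : k ≤ X.card) {t : ℝ} (ht : 0 < t) :
    (((X.powersetCard k).filter fun S =>
        (k : ℝ) * ((∑ y ∈ X, a y) / X.card) + k * t ≤ ∑ x ∈ S, a x).card : ℝ) ≤
      Real.exp (-2 * t ^ 2 * k) * (X.card.choose k : ℝ) := by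
  have hX : X.Nonempty := Finset.card_pos.1 (lt_of_lt_of_le hk hkn)
  set μ : ℝ := (∑ y ∈ X, a y) / X.card with hμ
  set lam : ℝ := 4 * t with hlam'
  have hlam : 0 ≤ lam := by positivity
  set b : V → ℝ := fun x => Real.exp (lam * (a x - μ)) with hb
  have hbnn : ∀ x ∈ X, 0 ≤ b x := fun x _ => Real.exp_nonneg _
  set Bad := (X.powersetCard k).filter fun S => (k : ℝ) * μ + k * t ≤ ∑ x ∈ S, a x with hBad
  have hNpos : (0:ℝ) < X.card := by exact_mod_cast hX.card_pos
  -- each bad set has large product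
  have hstep : ∀ S ∈ Bad, Real.exp (lam * (k * t)) ≤ ∏ x ∈ S, b x := by
    intro S hS
    obtain ⟨hS1, hS2⟩ := Finset.mem_filter.1 hS
    have hcard : S.card = k := (mem_powersetCard.1 hS1).2
    have : ∏ x ∈ S, b x = Real.exp (lam * ((∑ x ∈ S, a x) - k * μ)) := by
      rw [hb, ← Real.exp_sum]
      congr 1
      rw [← Finset.mul_sum, Finset.sum_sub_distrib]
      simp [hcard]
    rw [this]
    apply Real.exp_le_exp.2
    have h2 : k * t ≤ (∑ x ∈ S, a x) - k * μ := by linarith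
    exact mul_le_mul_of_nonneg_left h2 hlam
  have key : (Bad.card : ℝ) * Real.exp (lam * (k * t)) ≤
      (X.card.choose k : ℝ) * Real.exp (lam ^ 2 / 8) ^ k := by
    calc (Bad.card : ℝ) * Real.exp (lam * (k * t)) = ∑ _S ∈ Bad, Real.exp (lam * (k * t)) := by
          rw [Finset.sum_const, nsmul_eq_mul]
      _ ≤ ∑ S ∈ Bad, ∏ x ∈ S, b x := Finset.sum_le_sum hstep
      _ ≤ ∑ S ∈ X.powersetCard k, ∏ x ∈ S, b x := by
          apply Finset.sum_le_sum_of_subset_of_nonneg (Finset.filter_subset _ _)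
          intro S hS _
          exact Finset.prod_nonneg fun x hx =>
            hbnn x ((mem_powersetCard.1 hS).1 hx)
      _ ≤ (X.card.choose k : ℝ) * ((∑ x ∈ X, b x) / X.card) ^ k :=
          esymm_le_mean_pow X b hbnn k
      _ ≤ (X.card.choose k : ℝ) * Real.exp (lam ^ 2 / 8) ^ k := by
          apply mul_le_mul_of_nonneg_left _ (by positivity)
          apply pow_le_pow_left₀ (by positivity)
          rw [div_le_iff₀ hNpos, mul_comm]
          exact mgf_sum_bound X hX a h0 h1 hlam
  -- conclude
  have hexp : Real.exp (lam ^ 2 / 8) ^ k = Real.exp (-2 * t ^ 2 * k) * Real.exp (lam * (k * t)) := by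
    rw [← Real.exp_nat_mul, ← Real.exp_add]
    congr 1
    rw [hlam']
    ring
  rw [hexp] at key
  have hE : (0:ℝ) < Real.exp (lam * (k * t)) := Real.exp_pos _
  have key2 : (Bad.card : ℝ) * Real.exp (lam * (k * t)) ≤
      Real.exp (-2 * t ^ 2 * k) * (X.card.choose k : ℝ) * Real.exp (lam * (k * t)) := by
    calc (Bad.card : ℝ) * Real.exp (lam * (k * t)) ≤ _ := key
      _ = Real.exp (-2 * t ^ 2 * k) * (X.card.choose k : ℝ) * Real.exp (lam * (k * t)) := by
        ring
  exact le_of_mul_le_mul_right key2 hE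

lemma chernoff_abs (X : Finset V) (a : V → ℝ)
    (h0 : ∀ x ∈ X, 0 ≤ a x) (h1 : ∀ x ∈ X, a x ≤ 1)
    (k : ℕ) (hk : 0 < k) (hkn : k ≤ X.card) {t : ℝ} (ht : 0 < t) :
    (((X.powersetCard k).filter fun S =>
        t ≤ |(∑ x ∈ S, a x) / k - (∑ y ∈ X, a y) / X.card|).card : ℝ) ≤
      2 * Real.exp (-2 * t ^ 2 * k) * (X.card.choose k : ℝ) := by
  have hX : X.Nonempty := Finset.card_pos.1 (lt_of_lt_of_le hk hkn)
  have hNpos : (0:ℝ) < X.card := by exact_mod_cast hX.card_pos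
  have hkpos : (0:ℝ) < k := by exact_mod_cast hk
  set μ : ℝ := (∑ y ∈ X, a y) / X.card with hμ
  set a' : V → ℝ := fun x => 1 - a x with ha'
  have h0' : ∀ x ∈ X, 0 ≤ a' x := fun x hx => by simp [ha']; linarith [h1 x hx]
  have h1' : ∀ x ∈ X, a' x ≤ 1 := fun x hx => by simp [ha']; linarith [h0 x hx]
  have hμ' : (∑ y ∈ X, a' y) / X.card = 1 - μ := by
    rw [ha', hμ]
    rw [Finset.sum_sub_distrib]
    simp only [Finset.sum_const, nsmul_eq_mul, mul_one]
    field_simp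
  set Up := (X.powersetCard k).filter fun S => (k : ℝ) * μ + k * t ≤ ∑ x ∈ S, a x with hUp
  set Low := (X.powersetCard k).filter fun S =>
    (k : ℝ) * ((∑ y ∈ X, a' y) / X.card) + k * t ≤ ∑ x ∈ S, a' x with hLow
  have hsubset : (X.powersetCard k).filter (fun S =>
      t ≤ |(∑ x ∈ S, a x) / k - μ|) ⊆ Up ∪ Low := by
    intro S hS
    obtain ⟨hS1, hS2⟩ := Finset.mem_filter.1 hS
    have hcard : S.card = k := (mem_powersetCard.1 hS1).2
    rw [Finset.mem_union]
    rcases le_abs.1 hS2 with h | h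
    · left
      refine Finset.mem_filter.2 ⟨hS1, ?_⟩
      have h2 : t + μ ≤ (∑ x ∈ S, a x) / k := by linarith
      have h3 := (le_div_iff₀ hkpos).1 h2
      nlinarith
    · right
      refine Finset.mem_filter.2 ⟨hS1, ?_⟩
      have hsum' : ∑ x ∈ S, a' x = (k : ℝ) - ∑ x ∈ S, a x := by
        rw [ha', Finset.sum_sub_distrib]
        simp [hcard]
      rw [hμ', hsum']
      have h2 : (∑ x ∈ S, a x) / k ≤ μ - t := by
        rw [neg_sub] at h
        linarith
      have h3 := (div_le_iff₀ hkpos).1 h2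
      nlinarith
  calc (((X.powersetCard k).filter fun S =>
        t ≤ |(∑ x ∈ S, a x) / k - (∑ y ∈ X, a y) / X.card|).card : ℝ)
      ≤ ((Up ∪ Low).card : ℝ) := by
        exact_mod_cast Finset.card_le_card hsubset
    _ ≤ (Up.card : ℝ) + (Low.card : ℝ) := by
        exact_mod_cast Finset.card_union_le Up Low
    _ ≤ Real.exp (-2 * t ^ 2 * k) * (X.card.choose k : ℝ) +
          Real.exp (-2 * t ^ 2 * k) * (X.card.choose k : ℝ) := by
        apply add_le_add
        · exact chernoff_upper X a h0 h1 k hk hkn ht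
        · exact chernoff_upper X a' h0' h1' k hk hkn ht
    _ = 2 * Real.exp (-2 * t ^ 2 * k) * (X.card.choose k : ℝ) := by ring





lemma card_filter_product {α β : Type*} (s : Finset α) (t : Finset β) (P : α × β → Prop)
    [DecidablePred P] :
    ((s ×ˢ t).filter P).card = ∑ x ∈ s, (t.filter fun y => P (x, y)).card := by
  rw [Finset.card_filter, Finset.sum_product]
  exact Finset.sum_congr rfl fun x _ => (Finset.card_filter _ _).symm

lemma epairs_sum_left (G : SimpleGraph V) [DecidableRel G.Adj] (X Y : Finset V) :
    epairs G X Y = ∑ x ∈ X, (Y.filter fun y => G.Adj x y).card :=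
  card_filter_product X Y _

lemma epairs_sum_right (G : SimpleGraph V) [DecidableRel G.Adj] (X Y : Finset V) :
    epairs G X Y = ∑ y ∈ Y, (X.filter fun x => G.Adj x y).card := by
  calc epairs G X Y = ∑ x ∈ X, ∑ y ∈ Y, if G.Adj x y then 1 else 0 := by
        rw [epairs_sum_left]
        exact Finset.sum_congr rfl fun x _ => Finset.card_filter _ _
    _ = ∑ y ∈ Y, ∑ x ∈ X, if G.Adj x y then 1 else 0 := Finset.sum_comm
    _ = _ := Finset.sum_congr rfl fun y _ => (Finset.card_filter _ _).symm

lemma dens_left (G : SimpleGraph V) [DecidableRel G.Adj] (X Y : Finset V) :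
    dens G X Y = (∑ x ∈ X, ((Y.filter fun y => G.Adj x y).card : ℝ) / Y.card) / X.card := by
  unfold _root_.dens
  rw [epairs_sum_left]
  push_cast
  rw [← Finset.sum_div, div_div, mul_comm]

lemma dens_right (G : SimpleGraph V) [DecidableRel G.Adj] (X Y : Finset V) :
    dens G X Y = (∑ y ∈ Y, ((X.filter fun x => G.Adj x y).card : ℝ) / X.card) / Y.card := by
  unfold _root_.dens
  rw [epairs_sum_right]
  push_cast
  rw [← Finset.sum_div, div_div]

end Aux

set_option maxHeartbeats 2000000 in
open scoped Classical in
/-- Random subsets of size `k` preserve the edge density with probability at least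
`1 - 2 exp(-δ² k / 4)`, stated as a counting inequality over all pairs of `k`-subsets. -/
theorem density_preserved_by_random_subsets (G : SimpleGraph V) [DecidableRel G.Adj]
    (X Y : Finset V) (hX : X.Nonempty) (hY : Y.Nonempty) (δ : ℝ) (hδ : 0 < δ)
    (k : ℕ) (hk : 0 < k) (hkX : k ≤ X.card) (hkY : k ≤ Y.card) :
    (1 - 2 * Real.exp (-δ ^ 2 * k / 4)) * (X.card.choose k : ℝ) * (Y.card.choose k : ℝ) ≤
      (((X.powersetCard k ×ˢ Y.powersetCard k).filter fun p =>
          |dens G p.1 p.2 - dens G X Y| < δ).card : ℝ) := by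
  have hkR : (0:ℝ) < k := by exact_mod_cast hk
  have hXc : (0:ℝ) < X.card := by exact_mod_cast hX.card_pos
  have hYc : (0:ℝ) < Y.card := by exact_mod_cast hY.card_pos
  set Cx : ℝ := (X.card.choose k : ℝ) with hCx
  set Cy : ℝ := (Y.card.choose k : ℝ) with hCy
  have hCx0 : 0 ≤ Cx := by positivity
  have hCy0 : 0 ≤ Cy := by positivity
  set E4 : ℝ := Real.exp (-δ ^ 2 * k / 4) with hE4
  have hE4pos : 0 < E4 := Real.exp_pos _
  by_cases hcase : 1 ≤ 2 * E4
  · calc (1 - 2 * E4) * Cx * Cy ≤ 0 :=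
        mul_nonpos_of_nonpos_of_nonneg
          (mul_nonpos_of_nonpos_of_nonneg (by linarith) hCx0) hCy0
      _ ≤ _ := Nat.cast_nonneg _
  push_neg at hcase
  set T := X.powersetCard k ×ˢ Y.powersetCard k with hT
  set d : ℝ := dens G X Y with hd
  set P : Finset V × Finset V → Prop := fun p => |dens G p.1 p.2 - d| < δ with hP
  have hsplitT : (T.filter P).card + (T.filter fun p => ¬ P p).card = T.card :=
    Finset.card_filter_add_card_filter_not _
  have hTcard : (T.card : ℝ) = Cx * Cy := by
    rw [hT, Finset.card_product, Finset.card_powersetCard, Finset.card_powersetCard]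
    push_cast
    ring
  -- the function giving degrees into Y
  set aY : V → ℝ := fun x => ((Y.filter fun y => G.Adj x y).card : ℝ) / Y.card with haY
  have haY0 : ∀ x ∈ X, 0 ≤ aY x := fun x _ => by positivity
  have haY1 : ∀ x ∈ X, aY x ≤ 1 := fun x _ => by
    rw [haY, div_le_one hYc]
    exact_mod_cast Finset.card_filter_le _ _
  have hdensXY : d = (∑ x ∈ X, aY x) / X.card := dens_left G X Y
  have hdensX'Y : ∀ S ∈ X.powersetCard k, dens G S Y = (∑ x ∈ S, aY x) / k := by
    intro S hS
    rw [dens_left G S Y, (mem_powersetCard.1 hS).2]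
  have hδ2 : (0:ℝ) < δ / 2 := by linarith
  set E2 : ℝ := Real.exp (-2 * (δ/2) ^ 2 * k) with hE2
  have hE2eq : E2 = E4 * E4 := by
    rw [hE2, hE4, ← Real.exp_add]
    congr 1
    ring
  -- bound on the first-coordinate bad sets
  have hB1 : ((((X.powersetCard k).filter fun S => δ/2 ≤ |dens G S Y - d|)).card : ℝ) ≤
      2 * E2 * Cx := by
    have hch := chernoff_abs X aY haY0 haY1 k hk hkX hδ2
    have heq : ((X.powersetCard k).filter fun S => δ/2 ≤ |dens G S Y - d|) =
        ((X.powersetCard k).filter fun S =>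
          δ/2 ≤ |(∑ x ∈ S, aY x) / k - (∑ y ∈ X, aY y) / X.card|) := by
      apply Finset.filter_congr
      intro S hS
      rw [hdensX'Y S hS, ← hdensXY]
    rw [heq]
    exact hch
  -- bound on the second-coordinate bad sets, for each fixed S of size k
  have hB2 : ∀ S ∈ X.powersetCard k,
      ((((Y.powersetCard k).filter fun S' => δ/2 ≤ |dens G S S' - dens G S Y|)).card : ℝ) ≤
      2 * E2 * Cy := by
    intro S hS
    have hScard : S.card = k := (mem_powersetCard.1 hS).2
    set aS : V → ℝ := fun y => ((S.filter fun x => G.Adj x y).card : ℝ) / S.card with haS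
    have haS0 : ∀ y ∈ Y, 0 ≤ aS y := fun y _ => by positivity
    have haS1 : ∀ y ∈ Y, aS y ≤ 1 := fun y _ => by
      rw [haS, div_le_one (by rw [hScard]; exact hkR)]
      exact_mod_cast Finset.card_filter_le _ _
    have hch := chernoff_abs Y aS haS0 haS1 k hk hkY hδ2
    have heq : ((Y.powersetCard k).filter fun S' => δ/2 ≤ |dens G S S' - dens G S Y|) =
        ((Y.powersetCard k).filter fun S' =>
          δ/2 ≤ |(∑ y ∈ S', aS y) / k - (∑ y ∈ Y, aS y) / Y.card|) := by
      apply Finset.filter_congr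
      intro S' hS'
      rw [dens_right G S S', dens_right G S Y, (mem_powersetCard.1 hS').2]
    rw [heq]
    exact hch
  -- the bad set is contained in the union of the two bad events
  set B1 := T.filter fun p => δ/2 ≤ |dens G p.1 Y - d| with hB1d
  set B2 := T.filter fun p => δ/2 ≤ |dens G p.1 p.2 - dens G p.1 Y| with hB2d
  have hsub : T.filter (fun p => ¬ P p) ⊆ B1 ∪ B2 := by
    intro p hp
    obtain ⟨hp1, hp2⟩ := Finset.mem_filter.1 hp
    rw [hP] at hp2
    push_neg at hp2
    rw [Finset.mem_union]
    by_contra hcon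
    push_neg at hcon
    obtain ⟨hc1, hc2⟩ := hcon
    have h1 : |dens G p.1 Y - d| < δ/2 := by
      by_contra h
      exact hc1 (Finset.mem_filter.2 ⟨hp1, by linarith [not_lt.1 h]⟩)
    have h2 : |dens G p.1 p.2 - dens G p.1 Y| < δ/2 := by
      by_contra h
      exact hc2 (Finset.mem_filter.2 ⟨hp1, by linarith [not_lt.1 h]⟩)
    have htri := abs_sub_le (dens G p.1 p.2) (dens G p.1 Y) d
    linarith
  -- count B1
  have hB1card : (B1.card : ℝ) ≤ 2 * E2 * Cx * Cy := by
    have hprod : B1 = ((X.powersetCard k).filter fun S => δ/2 ≤ |dens G S Y - d|) ×ˢ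
        Y.powersetCard k := by
      rw [hB1d, hT]
      ext p
      simp only [Finset.mem_filter, Finset.mem_product]
      tauto
    rw [hprod, Finset.card_product]
    push_cast
    calc (((X.powersetCard k).filter fun S => δ/2 ≤ |dens G S Y - d|).card : ℝ) *
          ((Y.powersetCard k).card : ℝ)
        ≤ (2 * E2 * Cx) * ((Y.powersetCard k).card : ℝ) := by
          apply mul_le_mul_of_nonneg_right hB1 (Nat.cast_nonneg _)
      _ = 2 * E2 * Cx * Cy := by
          rw [Finset.card_powersetCard]
  -- count B2
  have hB2card : (B2.card : ℝ) ≤ Cx * (2 * E2 * Cy) := by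
    have hcount : B2.card = ∑ S ∈ X.powersetCard k,
        ((Y.powersetCard k).filter fun S' => δ/2 ≤ |dens G S S' - dens G S Y|).card := by
      rw [hB2d, hT]
      exact card_filter_product _ _ _
    rw [hcount]
    push_cast
    calc ∑ S ∈ X.powersetCard k,
          ((((Y.powersetCard k).filter fun S' => δ/2 ≤ |dens G S S' - dens G S Y|)).card : ℝ)
        ≤ ∑ _S ∈ X.powersetCard k, 2 * E2 * Cy := Finset.sum_le_sum hB2
      _ = Cx * (2 * E2 * Cy) := by
          rw [Finset.sum_const, nsmul_eq_mul, Finset.card_powersetCard]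
  -- combine
  have hbad : ((T.filter fun p => ¬ P p).card : ℝ) ≤ 4 * E2 * (Cx * Cy) := by
    calc ((T.filter fun p => ¬ P p).card : ℝ) ≤ ((B1 ∪ B2).card : ℝ) := by
          exact_mod_cast Finset.card_le_card hsub
      _ ≤ (B1.card : ℝ) + (B2.card : ℝ) := by exact_mod_cast Finset.card_union_le B1 B2
      _ ≤ 2 * E2 * Cx * Cy + Cx * (2 * E2 * Cy) := add_le_add hB1card hB2card
      _ = 4 * E2 * (Cx * Cy) := by ring
  have hgood : ((T.filter P).card : ℝ) = Cx * Cy - ((T.filter fun p => ¬ P p).card : ℝ) := by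
    have := hsplitT
    have hcast : ((T.filter P).card : ℝ) + ((T.filter fun p => ¬ P p).card : ℝ) = (T.card : ℝ) := by
      exact_mod_cast congrArg (fun n : ℕ => (n : ℝ)) this
    rw [hTcard] at hcast
    linarith
  have hfinal : (1 - 2 * E4) * Cx * Cy ≤ ((T.filter P).card : ℝ) := by
    rw [hgood]
    have h4 : 4 * E2 * (Cx * Cy) ≤ 2 * E4 * (Cx * Cy) := by
      apply mul_le_mul_of_nonneg_right _ (by positivity)
      rw [hE2eq]
      nlinarith
    nlinarith [hbad]
  exact hfinal
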